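/- Let X be a separable infinite-dimensional complex Banach space, let n ≥ 1, and let S be a bounded linear operator on X that is a generalised backward n-shift adapted to a family of linearly independent vectors {x^ℓ_k : 1 ≤ ℓ ≤ n, k ≥ 1} with dense linear span. Then every x^ℓ_k belongs to N∞(S) ∩ R∞(S), the intersection of the generalised kernel and the hyperrange of S. -/

import Mathlib

/-- `S` is a generalised backward shift adapted to the family `x` indexed by `ι × ℕ`
(with the second index 0-based, so `x (ℓ, 0)` plays the role of `x^ℓ_1`), where the
index set carries the lexicographic order: `S x^ℓ_k` is a finite linear combination of
the `x^p_q` with `(p,q) <lex (ℓ,k)`, in which, when `k > 0`, the coefficient of the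
immediate predecessor `x^ℓ_{k-1}` is nonzero. -/
def IsGenBackwardShift {X : Type*} [NormedAddCommGroup X] [NormedSpace ℂ X]
    {ι : Type*} [Preorder ι] (S : X →L[ℂ] X) (x : ι × ℕ → X) : Prop :=
  ∀ p : ι × ℕ, ∃ c : (ι × ℕ) →₀ ℂ,
    (∀ q ∈ c.support, Prod.Lex (· < ·) (· < ·) q p) ∧
    S (x p) = c.sum (fun q a => a • x q) ∧
    (1 ≤ p.2 → c (p.1, p.2 - 1) ≠ 0)

theorem stmt2 {X : Type*} [NormedAddCommGroup X] [NormedSpace ℂ X] [CompleteSpace X]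
    [TopologicalSpace.SeparableSpace X] (hinf : ¬ FiniteDimensional ℂ X)
    (n : ℕ) (hn : 1 ≤ n) (S : X →L[ℂ] X) (x : Fin n × ℕ → X)
    (hli : LinearIndependent ℂ x)
    (hdense : Dense (Submodule.span ℂ (Set.range x) : Set X))
    (hshift : IsGenBackwardShift S x) :
    ∀ p : Fin n × ℕ,
      (∃ m : ℕ, 1 ≤ m ∧ (S ^ m) (x p) = 0) ∧
      (∀ r : ℕ, 1 ≤ r → ∃ y : X, (S ^ r) y = x p) := by
  have wf : WellFounded (Prod.Lex ((· < ·) : Fin n → Fin n → Prop) ((· < ·) : ℕ → ℕ → Prop)) :=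
    WellFounded.prod_lex wellFounded_lt wellFounded_lt
  have hker : ∀ p : Fin n × ℕ, ∃ m : ℕ, 1 ≤ m ∧ (S ^ m) (x p) = 0 := by
    intro p
    induction p using wf.induction with
    | _ p IH =>
      obtain ⟨c, hsupp, heq, -⟩ := hshift p
      have H := fun q : c.support => IH q (hsupp q q.2)
      choose m hm1 hm2 using H
      set M := c.support.attach.sup m with hM
      refine ⟨M + 1, le_add_self, ?_⟩
      have : (S ^ (M + 1)) (x p) = (S ^ M) (S (x p)) := by
        rw [pow_succ]; rfl
      rw [this, heq, map_finsuppSum]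
      rw [Finsupp.sum]; apply Finset.sum_eq_zero
      intro q hq
      have hle : m ⟨q, hq⟩ ≤ M := Finset.le_sup (Finset.mem_attach _ ⟨q, hq⟩)
      have : (S ^ M) (x q) = 0 := by
        have : S ^ M = S ^ (M - m ⟨q, hq⟩) * S ^ (m ⟨q, hq⟩) := by
          rw [← pow_add, Nat.sub_add_cancel hle]
        rw [this]
        show (S ^ (M - m ⟨q, hq⟩)) ((S ^ (m ⟨q, hq⟩)) (x q)) = 0
        rw [hm2, map_zero]
      rw [map_smul, this, smul_zero]
  have hrng : ∀ r : ℕ, ∀ p : Fin n × ℕ, ∃ y : X, (S ^ r) y = x p := by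
    intro r
    induction r with
    | zero => exact fun p => ⟨x p, by simp⟩
    | succ r IHr =>
      intro p
      induction p using wf.induction with
      | _ p IHp =>
        obtain ⟨ℓ, k⟩ := p
        obtain ⟨c, hsupp, heq, hne⟩ := hshift (ℓ, k + 1)
        have hcp : c (ℓ, k) ≠ 0 := by simpa using hne (by simp)
        have hpmem : (ℓ, k) ∈ c.support := Finsupp.mem_support_iff.mpr hcp
        have hlex : ∀ q ∈ c.support.erase (ℓ, k),
            Prod.Lex ((· < ·) : Fin n → Fin n → Prop) ((· < ·) : ℕ → ℕ → Prop) q (ℓ, k) := by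
          intro q hq
          have hq' := hsupp q (Finset.mem_of_mem_erase hq)
          have hne' : q ≠ (ℓ, k) := Finset.ne_of_mem_erase hq
          rcases Prod.lex_iff.mp hq' with h1 | ⟨h1, h2⟩
          · exact Prod.Lex.left _ _ h1
          · obtain ⟨q1, q2⟩ := q
            simp only at h1 h2
            subst h1
            have : q2 < k := by
              rcases Nat.lt_succ_iff_lt_or_eq.mp h2 with h | h
              · exact h
              · exact absurd (by rw [h]) hne'
            exact Prod.Lex.right _ this
        set R := LinearMap.range ((S ^ (r + 1) : X →L[ℂ] X) : X →ₗ[ℂ] X) with hR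
        have h1 : S (x (ℓ, k + 1)) ∈ R := by
          obtain ⟨y, hy⟩ := IHr (ℓ, k + 1)
          refine ⟨y, ?_⟩
          rw [pow_succ']
          show S ((S ^ r) y) = _
          rw [hy]
        have h2 : ∀ q ∈ c.support.erase (ℓ, k), x q ∈ R := by
          intro q hq
          obtain ⟨y, hy⟩ := IHp q (hlex q hq)
          exact ⟨y, hy⟩
        have hsum : S (x (ℓ, k + 1)) = c (ℓ, k) • x (ℓ, k)
            + ∑ q ∈ c.support.erase (ℓ, k), c q • x q := by
          rw [heq, Finsupp.sum, ← Finset.add_sum_erase _ _ hpmem]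
        have hxp : x (ℓ, k) = (c (ℓ, k))⁻¹ •
            (S (x (ℓ, k + 1)) - ∑ q ∈ c.support.erase (ℓ, k), c q • x q) := by
          rw [hsum]
          rw [add_sub_cancel_right, smul_smul, inv_mul_cancel₀ hcp, one_smul]
        have : x (ℓ, k) ∈ R := by
          rw [hxp]
          exact Submodule.smul_mem _ _ (Submodule.sub_mem _ h1
            (Submodule.sum_mem _ (fun q hq => Submodule.smul_mem _ _ (h2 q hq))))
        exact this
  exact fun p => ⟨hker p, fun r _ => hrng r p⟩
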